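/- Let a group Γ act transitively on a countably infinite set X such that the associated random walk is transient-in-distribution: for a fixed symmetric finitely supported step distribution, the n-step transition probabilities p_n(x,y) tend to 0 for every pair x, y ∈ X. Then for every finite set S ⊆ X there exists g ∈ Γ with gS ∩ S = ∅. -/

import Mathlib

open scoped Classical

/-- If the random walk on `X` induced by a symmetric finitely supported step
distribution `μ` on a group `Γ` acting transitively on a countably infinite set `X`
has `n`-step transition probabilities `p_n(x,y) = ∑_{g x = y} P_n(g)` tending to `0`
for every pair `x, y`, then every finite subset of `X` can be moved off itself by
some element of `Γ`. -/
theorem moving_off_of_transient {Γ X : Type*} [Group Γ] [MulAction Γ X]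
    [Countable Γ] [Countable X] [Infinite X]
    (htrans : MulAction.IsPretransitive Γ X)
    (μ : Γ → ℝ) (hμ0 : ∀ g, 0 ≤ μ g) (hμfin : (Function.support μ).Finite)
    (hμsym : ∀ g : Γ, μ g⁻¹ = μ g) (hμ1 : ∑' g : Γ, μ g = 1)
    (P : ℕ → Γ → ℝ)
    (hP0 : ∀ g : Γ, P 0 g = if g = 1 then 1 else 0)
    (hPs : ∀ (n : ℕ) (g : Γ), P (n + 1) g = ∑' h : Γ, μ h * P n (h⁻¹ * g))
    (hdecay : ∀ x y : X,
      Filter.Tendsto (fun n : ℕ => ∑' g : {g : Γ // g • x = y}, P n g.val)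
        Filter.atTop (nhds 0)) :
    ∀ S : Set X, S.Finite → ∃ g : Γ, ∀ s ∈ S, g • s ∉ S := by
  classical
  set F : Finset Γ := hμfin.toFinset with hFdef
  have hF : ∀ g ∉ F, μ g = 0 := by
    intro g hg
    by_contra h
    exact hg (hμfin.mem_toFinset.mpr h)
  -- P n is a probability distribution
  have key : ∀ n, Summable (P n) ∧ (∀ g, 0 ≤ P n g) ∧ ∑' g, P n g = 1 := by
    intro n
    induction n with
    | zero =>
      have hz : ∀ g ∉ ({1} : Finset Γ), P 0 g = 0 := by
        intro g hg
        rw [hP0]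
        simp [Finset.mem_singleton.not.mp hg]
      refine ⟨summable_of_ne_finset_zero hz, ?_, ?_⟩
      · intro g; rw [hP0]; split <;> norm_num
      · rw [tsum_eq_sum hz]; simp [hP0]
    | succ n ih =>
      obtain ⟨hsum, hpos, htot⟩ := ih
      have hform : ∀ g, P (n+1) g = ∑ h ∈ F, μ h * P n (h⁻¹ * g) := by
        intro g
        rw [hPs]
        exact tsum_eq_sum (fun h hh => by rw [hF h hh, zero_mul])
      have hsummand : ∀ h : Γ, Summable (fun g => μ h * P n (h⁻¹ * g)) := by
        intro h
        exact (((Equiv.mulLeft h⁻¹).summable_iff (f := P n)).mpr hsum).mul_left (μ h)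
      have hsum' : Summable (P (n+1)) := by
        have : Summable (fun g => ∑ h ∈ F, μ h * P n (h⁻¹ * g)) :=
          summable_sum fun h _ => hsummand h
        exact this.congr fun g => (hform g).symm
      refine ⟨hsum', ?_, ?_⟩
      · intro g
        rw [hform g]
        exact Finset.sum_nonneg fun h _ => mul_nonneg (hμ0 h) (hpos _)
      · calc ∑' g, P (n+1) g = ∑' g, ∑ h ∈ F, μ h * P n (h⁻¹ * g) := tsum_congr hform
          _ = ∑ h ∈ F, ∑' g, μ h * P n (h⁻¹ * g) := Summable.tsum_finsetSum (fun h _ => hsummand h)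
          _ = ∑ h ∈ F, μ h * 1 := by
              refine Finset.sum_congr rfl fun h _ => ?_
              rw [tsum_mul_left]
              congr 1
              have := (Equiv.mulLeft h⁻¹).tsum_eq (P n)
              simpa [Equiv.mulLeft] using this.trans htot
          _ = 1 := by
              simp only [mul_one]
              rw [← tsum_eq_sum (L := SummationFilter.unconditional Γ) hF]
              exact hμ1
  intro S hS
  by_contra hcon
  push_neg at hcon
  set T : Finset X := hS.toFinset with hTdef
  have hmemT : ∀ x, x ∈ T ↔ x ∈ S := fun x => hS.mem_toFinset
  -- the double sum of transition probabilities over S × S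
  set A : ℕ → ℝ := fun n => ∑ x ∈ T, ∑ y ∈ T, ∑' g, Set.indicator {g : Γ | g • x = y} (P n) g
    with hAdef
  -- A tends to 0
  have hAtend : Filter.Tendsto A Filter.atTop (nhds 0) := by
    have h0 : (0 : ℝ) = ∑ x ∈ T, ∑ y ∈ T, (0 : ℝ) := by simp
    rw [h0]
    refine tendsto_finset_sum _ fun x _ => tendsto_finset_sum _ fun y _ => ?_
    have := hdecay x y
    have heq : ∀ n : ℕ, (∑' g : {g : Γ // g • x = y}, P n g.val)
        = ∑' g, Set.indicator {g : Γ | g • x = y} (P n) g := by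
      intro n
      exact tsum_subtype {g : Γ | g • x = y} (P n)
    simpa [heq] using this
  -- 1 ≤ A n for all n
  have hA1 : ∀ n, (1 : ℝ) ≤ A n := by
    intro n
    obtain ⟨hsum, hpos, htot⟩ := key n
    have hindsum : ∀ (x y : X), Summable (Set.indicator {g : Γ | g • x = y} (P n)) :=
      fun x y => hsum.indicator _
    have hinnersum : ∀ (x : X), Summable (fun g => ∑ y ∈ T,
        Set.indicator {g : Γ | g • x = y} (P n) g) :=
      fun x => summable_sum fun y _ => hindsum x y
    have hA : A n = ∑' g, ∑ x ∈ T, ∑ y ∈ T, Set.indicator {g : Γ | g • x = y} (P n) g := by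
      rw [hAdef]
      rw [Summable.tsum_finsetSum (fun x _ => hinnersum x)]
      exact Finset.sum_congr rfl fun x _ => (Summable.tsum_finsetSum (fun y _ => hindsum x y)).symm
    rw [← htot, hA]
    refine Summable.tsum_le_tsum ?_ hsum (summable_sum fun x _ => hinnersum x)
    intro g
    obtain ⟨s, hsS, hgs⟩ := hcon g
    have hsT : s ∈ T := (hmemT s).mpr hsS
    have hgsT : g • s ∈ T := (hmemT _).mpr hgs
    have hindnn : ∀ (x y : X) (h : Γ), 0 ≤ Set.indicator {g : Γ | g • x = y} (P n) h :=
      fun x y h => Set.indicator_nonneg (fun a _ => hpos a) h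
    calc P n g = Set.indicator {h : Γ | h • s = g • s} (P n) g := by
          rw [Set.indicator_of_mem (by simp : g ∈ {h : Γ | h • s = g • s})]
      _ ≤ ∑ y ∈ T, Set.indicator {h : Γ | h • s = y} (P n) g :=
          Finset.single_le_sum (fun y _ => hindnn s y g) hgsT
      _ ≤ ∑ x ∈ T, ∑ y ∈ T, Set.indicator {h : Γ | h • x = y} (P n) g :=
          Finset.single_le_sum
            (fun x _ => Finset.sum_nonneg fun y _ => hindnn x y g) hsT
  have : (1 : ℝ) ≤ 0 := ge_of_tendsto hAtend (Filter.Eventually.of_forall hA1)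
  norm_num at this
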